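/- For n ≥ 2 and p a prime with p ≥ n+1, let c ∈ {1,...,p-1} and σ ∈ S_n. Define the (n-1)×n matrix M by M_{1,j} = 0, M_{2,j} = c·σ(j), and M_{i,j} = (n+1-j)·p^{i-2} for 3 ≤ i ≤ n-1. Then for every k-subset I ⊆ [n] with 2 ≤ k ≤ n-1, the values w_τ = Σ_{i=1}^k M_{i, j_{τ(i)}} (where I = {j_1 < ... < j_k}) are pairwise distinct as τ ranges over S_k. -/

import Mathlib

private lemma digits_sum_bound (p : ℕ) (hp : 1 ≤ p) :
    ∀ (m : ℕ) (d : ℕ → ℤ), (∀ i < m, 0 ≤ d i ∧ d i < p) →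
      0 ≤ ∑ i ∈ Finset.range m, d i * (p : ℤ) ^ i ∧
      ∑ i ∈ Finset.range m, d i * (p : ℤ) ^ i < (p : ℤ) ^ m := by
  intro m
  induction m with
  | zero => simp
  | succ m ih =>
    intro d hd
    have hdm := hd m (Nat.lt_succ_self m)
    have hih := ih d (fun i hi => hd i (hi.trans (Nat.lt_succ_self m)))
    rw [Finset.sum_range_succ]
    have hppos : (0 : ℤ) < (p : ℤ) ^ m := by positivity
    constructor
    · have : 0 ≤ d m * (p : ℤ) ^ m := mul_nonneg hdm.1 hppos.le
      linarith [hih.1]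
    · have h1 : d m ≤ (p : ℤ) - 1 := by linarith [hdm.2]
      have h2 : d m * (p : ℤ) ^ m ≤ ((p : ℤ) - 1) * (p : ℤ) ^ m :=
        mul_le_mul_of_nonneg_right h1 hppos.le
      have : ((p : ℤ) - 1) * (p : ℤ) ^ m + (p : ℤ) ^ m = (p : ℤ) ^ (m + 1) := by ring
      linarith [hih.2]

private lemma digits_inj (p : ℕ) (hp : 1 ≤ p) :
    ∀ (m : ℕ) (d e : ℕ → ℤ), (∀ i < m, 0 ≤ d i ∧ d i < p) →
      (∀ i < m, 0 ≤ e i ∧ e i < p) →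
      (∑ i ∈ Finset.range m, d i * (p : ℤ) ^ i = ∑ i ∈ Finset.range m, e i * (p : ℤ) ^ i) →
      ∀ i < m, d i = e i := by
  intro m
  induction m with
  | zero => intro d e hd he hs i hi; omega
  | succ m ih =>
    intro d e hd he hsum
    have hd' := fun i (hi : i < m) => hd i (hi.trans (Nat.lt_succ_self m))
    have he' := fun i (hi : i < m) => he i (hi.trans (Nat.lt_succ_self m))
    have hbd := digits_sum_bound p hp m d hd'
    have hbe := digits_sum_bound p hp m e he'
    rw [Finset.sum_range_succ, Finset.sum_range_succ] at hsum
    have hppos : (0 : ℤ) < (p : ℤ) ^ m := by positivity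
    have htop : d m = e m := by
      by_contra hne
      rcases lt_or_gt_of_ne hne with hlt | hlt
      · have h1 : d m + 1 ≤ e m := hlt
        have h2 : (d m + 1) * (p : ℤ) ^ m ≤ e m * (p : ℤ) ^ m :=
          mul_le_mul_of_nonneg_right h1 hppos.le
        nlinarith [hbd.2, hbe.1]
      · have h1 : e m + 1 ≤ d m := hlt
        have h2 : (e m + 1) * (p : ℤ) ^ m ≤ d m * (p : ℤ) ^ m :=
          mul_le_mul_of_nonneg_right h1 hppos.le
        nlinarith [hbe.2, hbd.1]
    have hrest : ∑ i ∈ Finset.range m, d i * (p : ℤ) ^ i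
        = ∑ i ∈ Finset.range m, e i * (p : ℤ) ^ i := by
      rw [htop] at hsum; linarith
    intro i hi
    rcases Nat.lt_succ_iff_lt_or_eq.mp hi with hi' | hi'
    · exact ih d e hd' he' hrest i hi'
    · rw [hi']; exact htop

/-- For the weight matrix `M_c^σ` (rows and columns written `0`-indexed: row `0` is zero,
row `1` is `c·σ(j)`, and row `i ≥ 2` is `(n + 1 - j')·p^(i'-2)` in `1`-indexed terms),
the weights `w_τ = ∑ᵢ M_{i, j_{τ(i)}}` of the permutations `τ ∈ S_k` on a fixed
`k`-subset `I = {j₁ < … < j_k}` of `[n]` are pairwise distinct. -/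
theorem stmt_5 (n p c k : ℕ) (hn : 2 ≤ n) (hp : p.Prime) (hpn : n + 1 ≤ p)
    (hc1 : 1 ≤ c) (hcp : c ≤ p - 1) (σ : Equiv.Perm (Fin n))
    (M : Fin (n - 1) → Fin n → ℤ)
    (hM : ∀ i j, M i j =
      if (i : ℕ) = 0 then 0
      else if (i : ℕ) = 1 then (c : ℤ) * ((σ j : ℕ) + 1)
      else ((n : ℤ) - (j : ℕ)) * (p : ℤ) ^ ((i : ℕ) - 1))
    (hk2 : 2 ≤ k) (hk : k ≤ n - 1) (ι : Fin k → Fin n) (hι : StrictMono ι) :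
    Function.Injective
      (fun τ : Equiv.Perm (Fin k) => ∑ i, M (Fin.castLE hk i) (ι (τ i))) := by
  obtain ⟨m, rfl⟩ : ∃ m, k = m + 2 := ⟨k - 2, by omega⟩
  have hppos : 0 < p := hp.pos
  have h1k : (1 : ℕ) < m + 2 := by omega
  set D : Equiv.Perm (Fin (m + 2)) → ℕ → ℤ := fun τ j =>
    if hj : j < m then ((n : ℤ) - (ι (τ ⟨j + 2, by omega⟩) : ℕ)) else 0 with hD
  set X : Equiv.Perm (Fin (m + 2)) → ℤ := fun τ =>
    (c : ℤ) * ((σ (ι (τ ⟨1, h1k⟩)) : ℕ) + 1) with hX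
  have key : ∀ τ : Equiv.Perm (Fin (m + 2)),
      ∑ i, M (Fin.castLE hk i) (ι (τ i))
        = X τ + (p : ℤ) * ∑ j ∈ Finset.range m, D τ j * (p : ℤ) ^ j := by
    intro τ
    have hterm : ∀ i : Fin (m + 2), M (Fin.castLE hk i) (ι (τ i))
        = if (i : ℕ) = 0 then 0
          else if (i : ℕ) = 1 then (c : ℤ) * ((σ (ι (τ i)) : ℕ) + 1)
          else ((n : ℤ) - (ι (τ i) : ℕ)) * (p : ℤ) ^ ((i : ℕ) - 1) := by
      intro i
      rw [hM]
      rfl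
    set g : ℕ → ℤ := fun a =>
      if ha : a < m + 2 then M (Fin.castLE hk ⟨a, ha⟩) (ι (τ ⟨a, ha⟩)) else 0 with hg
    have hgval : ∀ i : Fin (m + 2), M (Fin.castLE hk i) (ι (τ i)) = g (i : ℕ) := by
      intro i
      simp only [hg, i.isLt, dif_pos, Fin.eta]
    have hg0 : g 0 = 0 := by
      have h02 : (0 : ℕ) < m + 2 := by omega
      rw [hg]
      simp only [h02, dif_pos]
      rw [hterm ⟨0, h02⟩]
      norm_num
    have hg1 : g (0 + 1) = X τ := by
      rw [hg]
      simp only [h1k, Nat.zero_add, dif_pos]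
      rw [hterm ⟨1, h1k⟩]
      norm_num [hX]
    have hg2 : ∀ j, j < m → g (j + 1 + 1) = (p : ℤ) * (D τ j * (p : ℤ) ^ j) := by
      intro j hj
      have hj2 : j + 1 + 1 < m + 2 := by omega
      rw [hg]
      simp only [hj2, dif_pos]
      rw [hterm ⟨j + 1 + 1, hj2⟩]
      have hval : ((⟨j + 1 + 1, hj2⟩ : Fin (m + 2)) : ℕ) = j + 2 := rfl
      rw [hval, if_neg (by omega), if_neg (by omega)]
      rw [hD]
      simp only [hj, dif_pos]
      rw [show j + 2 - 1 = j + 1 from rfl, pow_succ]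
      ring
    calc ∑ i, M (Fin.castLE hk i) (ι (τ i)) = ∑ i : Fin (m + 2), g (i : ℕ) :=
          Finset.sum_congr rfl fun i _ => hgval i
      _ = ∑ a ∈ Finset.range (m + 2), g a := Fin.sum_univ_eq_sum_range g (m + 2)
      _ = (∑ a ∈ Finset.range m, g (a + 1 + 1) + g (0 + 1)) + g 0 := by
          rw [Finset.sum_range_succ', Finset.sum_range_succ']
      _ = X τ + (p : ℤ) * ∑ j ∈ Finset.range m, D τ j * (p : ℤ) ^ j := by
          rw [Finset.sum_congr rfl (fun a ha => hg2 a (Finset.mem_range.mp ha)),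
            ← Finset.mul_sum, hg0, hg1]
          ring
  intro τ τ' h
  simp only at h
  rw [key τ, key τ'] at h
  -- Step A : the first (mod p) digit gives τ ⟨1⟩ = τ' ⟨1⟩
  have hpz : (p : ℤ) ≠ 0 := by positivity
  have hstep1 : τ ⟨1, h1k⟩ = τ' ⟨1, h1k⟩ := by
    have hdvd : (p : ℤ) ∣ (X τ - X τ') := by
      refine ⟨∑ j ∈ Finset.range m, D τ' j * (p : ℤ) ^ j
        - ∑ j ∈ Finset.range m, D τ j * (p : ℤ) ^ j, by linarith⟩
    have hA : (σ (ι (τ ⟨1, h1k⟩)) : ℕ) < n := (σ (ι (τ ⟨1, h1k⟩))).isLt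
    have hB : (σ (ι (τ' ⟨1, h1k⟩)) : ℕ) < n := (σ (ι (τ' ⟨1, h1k⟩))).isLt
    have hXd : X τ - X τ' = (c : ℤ) *
        (((σ (ι (τ ⟨1, h1k⟩)) : ℕ) : ℤ) - ((σ (ι (τ' ⟨1, h1k⟩)) : ℕ) : ℤ)) := by
      rw [hX]; ring
    rw [hXd] at hdvd
    have hpc : ¬ (p : ℤ) ∣ (c : ℤ) := by
      rw [Int.natCast_dvd_natCast]
      intro hd
      have := Nat.le_of_dvd (by omega) hd
      omega
    have hprime : Prime (p : ℤ) := Nat.prime_iff_prime_int.mp hp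
    have hdvd2 : (p : ℤ) ∣
        (((σ (ι (τ ⟨1, h1k⟩)) : ℕ) : ℤ) - ((σ (ι (τ' ⟨1, h1k⟩)) : ℕ) : ℤ)) :=
      (hprime.dvd_mul.mp hdvd).resolve_left hpc
    have hzero : (((σ (ι (τ ⟨1, h1k⟩)) : ℕ) : ℤ) - ((σ (ι (τ' ⟨1, h1k⟩)) : ℕ) : ℤ)) = 0 := by
      refine Int.eq_zero_of_abs_lt_dvd hdvd2 ?_
      rw [abs_lt]
      omega
    have hval : (σ (ι (τ ⟨1, h1k⟩)) : ℕ) = (σ (ι (τ' ⟨1, h1k⟩)) : ℕ) := by omega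
    exact hι.injective (σ.injective (Fin.val_injective hval))
  -- Step B : the higher digits give τ ⟨j+2⟩ = τ' ⟨j+2⟩
  have hXeq : X τ = X τ' := by rw [hX]; simp only [hstep1]
  have hsum : ∑ j ∈ Finset.range m, D τ j * (p : ℤ) ^ j
      = ∑ j ∈ Finset.range m, D τ' j * (p : ℤ) ^ j := by
    rw [hXeq] at h
    have := mul_left_cancel₀ hpz (by linarith : (p : ℤ) * ∑ j ∈ Finset.range m, D τ j * (p : ℤ) ^ j = (p : ℤ) * ∑ j ∈ Finset.range m, D τ' j * (p : ℤ) ^ j)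
    exact this
  have hDbound : ∀ ρ : Equiv.Perm (Fin (m + 2)), ∀ j < m, 0 ≤ D ρ j ∧ D ρ j < p := by
    intro ρ j hj
    rw [hD]
    simp only [hj, dif_pos]
    have := (ι (ρ ⟨j + 2, by omega⟩)).isLt
    constructor <;> omega
  have hDeq := digits_inj p hppos m (D τ) (D τ') (hDbound τ) (hDbound τ') hsum
  have hstep2 : ∀ j (hj : j < m), τ ⟨j + 2, by omega⟩ = τ' ⟨j + 2, by omega⟩ := by
    intro j hj
    have := hDeq j hj
    rw [hD] at this
    simp only [hj, dif_pos] at this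
    have hval : (ι (τ ⟨j + 2, by omega⟩) : ℕ) = (ι (τ' ⟨j + 2, by omega⟩) : ℕ) := by omega
    exact hι.injective (Fin.val_injective hval)
  -- combine: τ and τ' agree away from 0
  have hne : ∀ i : Fin (m + 2), (i : ℕ) ≠ 0 → τ i = τ' i := by
    intro i hi0
    rcases Nat.lt_or_ge (i : ℕ) 2 with h2 | h2
    · have hi1 : (i : ℕ) = 1 := by omega
      have : i = ⟨1, h1k⟩ := Fin.ext hi1
      rw [this]; exact hstep1
    · obtain ⟨j, hj⟩ : ∃ j, (i : ℕ) = j + 2 := ⟨(i : ℕ) - 2, by omega⟩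
      have hjm : j < m := by have := i.isLt; omega
      have : i = ⟨j + 2, by omega⟩ := Fin.ext hj
      rw [this]; exact hstep2 j hjm
  -- and therefore at 0 as well
  apply Equiv.ext
  intro i
  by_cases hi : (i : ℕ) = 0
  · have hi' : i = ⟨0, by omega⟩ := Fin.ext hi
    rw [hi']
    set w := τ'⁻¹ (τ ⟨0, by omega⟩) with hw
    have hww : τ' w = τ ⟨0, by omega⟩ := Equiv.apply_symm_apply τ' _
    by_cases hw0 : (w : ℕ) = 0
    · have hw' : w = ⟨0, by omega⟩ := Fin.ext hw0
      rw [← hww, hw']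
    · have h1 : τ w = τ' w := hne w hw0
      have h2 : τ w = τ ⟨0, by omega⟩ := h1.trans hww
      have h3 : w = ⟨0, by omega⟩ := τ.injective h2
      exact absurd (congrArg Fin.val h3) hw0
  · exact hne i hi
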